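/- If B is a DDSA all of whose guards are conjunctions of monotonicity constraints over ℚ, and 𝒞 is a finite set of monotonicity constraints, then (B, 𝒞) admits a finite summary; specifically, B × MC_Const is a finite history set for (B, 𝒞), where Const is the set of constants appearing in 𝒞, α₀, and the guards of B, and MC_Const is the (finite up to equivalence) set of quantifier-free MC-formulas over V and Const. -/

import Mathlib

namespace DDS

inductive Trm (X D : Type) where
  | var : X → Trm X D
  | const : D → Trm X D
  | add : Trm X D → Trm X D → Trm X D
  | sub : Trm X D → Trm X D → Trm X D

def Trm.eval {X D : Type} [Add D] [Sub D] (α : X → D) : Trm X D → D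
  | .var x => α x
  | .const c => c
  | .add s t => s.eval α + t.eval α
  | .sub s t => s.eval α - t.eval α

def Trm.vars {X D : Type} : Trm X D → Set X
  | .var x => {x}
  | .const _ => ∅
  | .add s t => s.vars ∪ t.vars
  | .sub s t => s.vars ∪ t.vars

def Trm.consts {X D : Type} : Trm X D → Set D
  | .var _ => ∅
  | .const c => {c}
  | .add s t => s.consts ∪ t.consts
  | .sub s t => s.consts ∪ t.consts

/-- Conjunctions of linear arithmetic constraints (Definition 1), with the
trivially true constraint `tru` (the empty conjunction). -/
inductive Constr (X D : Type) where
  | tru : Constr X D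
  | eq : Trm X D → Trm X D → Constr X D
  | ne : Trm X D → Trm X D → Constr X D
  | lt : Trm X D → Trm X D → Constr X D
  | le : Trm X D → Trm X D → Constr X D
  | and : Constr X D → Constr X D → Constr X D

def Constr.holds {X D : Type} [Add D] [Sub D] [LT D] [LE D] (α : X → D) :
    Constr X D → Prop
  | .tru => True
  | .eq s t => s.eval α = t.eval α
  | .ne s t => s.eval α ≠ t.eval α
  | .lt s t => s.eval α < t.eval α
  | .le s t => s.eval α ≤ t.eval α
  | .and c d => c.holds α ∧ d.holds α

def Constr.vars {X D : Type} : Constr X D → Set X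
  | .tru => ∅
  | .eq s t => s.vars ∪ t.vars
  | .ne s t => s.vars ∪ t.vars
  | .lt s t => s.vars ∪ t.vars
  | .le s t => s.vars ∪ t.vars
  | .and c d => c.vars ∪ d.vars

def Constr.consts {X D : Type} : Constr X D → Set D
  | .tru => ∅
  | .eq s t => s.consts ∪ t.consts
  | .ne s t => s.consts ∪ t.consts
  | .lt s t => s.consts ∪ t.consts
  | .le s t => s.consts ∪ t.consts
  | .and c d => c.consts ∪ d.consts

/-- A data-aware dynamic system with arithmetic (Definition 2).  Guards are
constraints over read variables (`Sum.inl`) and write variables (`Sum.inr`). -/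
structure DDSA (B A X D : Type) where
  init : B
  trans : B → A → Option B
  final : Set B
  a0 : X → D
  guard : A → Constr (X ⊕ X) D

variable {B A X D : Type} [Add D] [Sub D] [LT D] [LE D]

/-- `write(a)`: variables whose write copy occurs in the guard of `a`. -/
def DDSA.writes (M : DDSA B A X D) (a : A) : Set X :=
  {x | Sum.inr x ∈ (M.guard a).vars}

/-- Semantics of the transition formula
`Δ_a = guard(a) ∧ ⋀_{v ∉ write(a)} v^w = v^r`. -/
def DDSA.deltaHolds (M : DDSA B A X D) (a : A) (β : X ⊕ X → D) : Prop :=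
  (M.guard a).holds β ∧ ∀ v, v ∉ M.writes a → β (Sum.inr v) = β (Sum.inl v)

/-- A step `(b, α) →a (b', α')` of the DDSA. -/
def DDSA.step (M : DDSA B A X D) (b : B) (α : X → D) (a : A) (b' : B)
    (α' : X → D) : Prop :=
  M.trans b a = some b' ∧ (M.guard a).holds (Sum.elim α α') ∧
    ∀ v, v ∉ M.writes a → α' v = α v

/-- Symbolic runs: paths in the transition graph. -/
inductive DDSA.SymRun (M : DDSA B A X D) : B → List A → B → Prop where
  | nil (b : B) : DDSA.SymRun M b [] b
  | cons {b b' b'' : B} {a : A} {as : List A} :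
      M.trans b a = some b' → DDSA.SymRun M b' as b'' →
      DDSA.SymRun M b (a :: as) b''

/-- Runs with explicit intermediate assignments: each list entry records the
action taken and the assignment reached after it. -/
inductive DDSA.RunSteps (M : DDSA B A X D) :
    B → (X → D) → List (A × (X → D)) → B → Prop where
  | nil (b : B) (α : X → D) : DDSA.RunSteps M b α [] b
  | cons {b b' b'' : B} {α α' : X → D} {a : A} {l : List (A × (X → D))} :
      M.step b α a b' α' → DDSA.RunSteps M b' α' l b'' →
      DDSA.RunSteps M b α ((a, α') :: l) b''

/-- An assignment satisfies a set of constraints. -/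
def csHolds (α : X → D) (C : Set (Constr X D)) : Prop := ∀ c ∈ C, c.holds α

/-- Semantics of `update(φ, a) = ∃U. φ(U) ∧ Δ_a(U, V)`. -/
def DDSA.updateSem (M : DDSA B A X D) (P : (X → D) → Prop) (a : A) :
    (X → D) → Prop :=
  fun α' => ∃ α, P α ∧ M.deltaHolds a (Sum.elim α α')

/-- Semantics of `⋀(C_{α₀} ∪ C)`. -/
def DDSA.initPred (M : DDSA B A X D) (C : Set (Constr X D)) : (X → D) → Prop :=
  fun α => (∀ v, α v = M.a0 v) ∧ csHolds α C

/-- Semantics of the history constraint `hist(σ, C⃗)` (Definition 7), where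
the symbolic run and the verification constraint sequence are paired up:
`C0` is the constraint set attached to the initial position, and each list
entry pairs an action with the constraint set of the position it reaches. -/
def DDSA.hist (M : DDSA B A X D) (C0 : Set (Constr X D))
    (steps : List (A × Set (Constr X D))) : (X → D) → Prop :=
  steps.foldl (fun P p => fun α => M.updateSem P p.1 α ∧ csHolds α p.2)
    (M.initPred C0)

/-- Logical equivalence. -/
def eqv {X D : Type} (P Q : (X → D) → Prop) : Prop := ∀ α, P α ↔ Q α

/-- `P` is (equivalent to) a history constraint of `(M, CC)` whose symbolic
run ends in `b`. -/
def DDSA.HistoryOf (M : DDSA B A X D) (CC : Set (Constr X D)) (b : B)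
    (P : (X → D) → Prop) : Prop :=
  ∃ (C0 : Set (Constr X D)) (steps : List (A × Set (Constr X D))),
    C0 ⊆ CC ∧ (∀ p ∈ steps, p.2 ⊆ CC) ∧
    M.SymRun M.init (steps.map Prod.fst) b ∧ eqv P (M.hist C0 steps)

/-- The characterization of history sets from Lemma 2: closure under initial
constraints and under updates. -/
def DDSA.IsHistorySet (M : DDSA B A X D) (CC : Set (Constr X D))
    (Φ : Set (B × ((X → D) → Prop))) : Prop :=
  (∀ C ⊆ CC, ∃ Q, (M.init, Q) ∈ Φ ∧ eqv Q (M.initPred C)) ∧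
  (∀ b P, (b, P) ∈ Φ → ∀ a b', M.trans b a = some b' → ∀ C ⊆ CC,
    ∃ Q, (b', Q) ∈ Φ ∧ eqv Q (fun α => M.updateSem P a α ∧ csHolds α C))

/-- History sets (Definition 6): `Φ` contains, up to logical equivalence,
exactly the history constraints of `(M, CC)` paired with their end states. -/
def DDSA.IsHistorySetExact (M : DDSA B A X D) (CC : Set (Constr X D))
    (Φ : Set (B × ((X → D) → Prop))) : Prop :=
  (∀ b P, M.HistoryOf CC b P → ∃ Q, (b, Q) ∈ Φ ∧ eqv P Q) ∧
  (∀ b Q, (b, Q) ∈ Φ → M.HistoryOf CC b Q)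

/-- `(M, CC)` has finite summary; by Lemma 3 a finite history set suffices
(taking logical equivalence as the equivalence relation). -/
def DDSA.HasFiniteSummary (M : DDSA B A X D) (CC : Set (Constr X D)) : Prop :=
  ∃ Φ : Set (B × ((X → D) → Prop)), Φ.Finite ∧ M.IsHistorySet CC Φ

/-- Atomic terms: variables or constants. -/
def Trm.atomic {X D : Type} : Trm X D → Prop
  | .var _ => True
  | .const _ => True
  | _ => False

/-- Monotonicity constraints: conjunctions of comparisons between atomic
terms. -/
def Constr.isMC {X D : Type} : Constr X D → Prop
  | .tru => True
  | .eq s t => s.atomic ∧ t.atomic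
  | .ne s t => s.atomic ∧ t.atomic
  | .lt s t => s.atomic ∧ t.atomic
  | .le s t => s.atomic ∧ t.atomic
  | .and c d => c.isMC ∧ d.isMC

/-- Boolean combinations of constraints (used for MC-formulas). -/
inductive BForm (X D : Type) where
  | atom : Constr X D → BForm X D
  | and : BForm X D → BForm X D → BForm X D
  | or : BForm X D → BForm X D → BForm X D
  | not : BForm X D → BForm X D

def BForm.holds {X D : Type} [Add D] [Sub D] [LT D] [LE D] (α : X → D) :
    BForm X D → Prop
  | .atom c => c.holds α
  | .and f g => f.holds α ∧ g.holds α
  | .or f g => f.holds α ∨ g.holds α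
  | .not f => ¬ f.holds α

def BForm.isMC {X D : Type} : BForm X D → Prop
  | .atom c => c.isMC
  | .and f g => f.isMC ∧ g.isMC
  | .or f g => f.isMC ∧ g.isMC
  | .not f => f.isMC

def BForm.constsIn {X D : Type} (S : Set D) : BForm X D → Prop
  | .atom c => c.consts ⊆ S
  | .and f g => f.constsIn S ∧ g.constsIn S
  | .or f g => f.constsIn S ∧ g.constsIn S
  | .not f => f.constsIn S

/-- `B × MC_Const`: all pairs of a state and a predicate definable by an
MC-formula over `V` and `Const`. -/
def PhiMC (B X : Type) (Const : Finset ℚ) : Set (B × ((X → ℚ) → Prop)) :=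
  {p | ∃ φ : BForm X ℚ, φ.isMC ∧ φ.constsIn ↑Const ∧
    p.2 = fun α => φ.holds α}


section MCAux

instance : Finite Ordering :=
  .intro (n := 3)
    { toFun := fun o => match o with | .lt => 0 | .eq => 1 | .gt => 2
      invFun := fun i => if i = 0 then .lt else if i = 1 then .eq else .gt
      left_inv := by intro o; cases o <;> rfl
      right_inv := by intro i; fin_cases i <;> rfl }

/-! ### Auxiliary machinery: order patterns over `ℚ` -/

/-- Two assignments have the same order pattern w.r.t. each other and the
constants in `K`. -/
def patEq {Y : Type} (K : Finset ℚ) (α β : Y → ℚ) : Prop :=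
  (∀ x y, cmp (α x) (α y) = cmp (β x) (β y)) ∧
  (∀ x, ∀ c ∈ K, cmp (α x) c = cmp (β x) c)

lemma patEq.symm' {Y : Type} {K : Finset ℚ} {α β : Y → ℚ} (h : patEq K α β) :
    patEq K β α :=
  ⟨fun x y => (h.1 x y).symm, fun x c hc => (h.2 x c hc).symm⟩

lemma lt_iff_of_cmp {a b a' b' : ℚ} (h : cmp a b = cmp a' b') : a < b ↔ a' < b' := by
  rw [← cmp_eq_lt_iff a b, ← cmp_eq_lt_iff a' b', h]

lemma eq_iff_of_cmp {a b a' b' : ℚ} (h : cmp a b = cmp a' b') : a = b ↔ a' = b' := by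
  rw [← cmp_eq_eq_iff a b, ← cmp_eq_eq_iff a' b', h]

lemma gt_iff_of_cmp {a b a' b' : ℚ} (h : cmp a b = cmp a' b') : b < a ↔ b' < a' := by
  rw [← cmp_eq_gt_iff a b, ← cmp_eq_gt_iff a' b', h]

lemma le_iff_of_cmp {a b a' b' : ℚ} (h : cmp a b = cmp a' b') : a ≤ b ↔ a' ≤ b' := by
  rw [← not_lt, ← not_lt]; exact not_congr (gt_iff_of_cmp h)

lemma cmp_map_of_strictMonoOn {f : ℚ → ℚ} {A : Set ℚ} (hf : StrictMonoOn f A)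
    {a b : ℚ} (ha : a ∈ A) (hb : b ∈ A) : cmp (f a) (f b) = cmp a b := by
  rcases lt_trichotomy a b with h | h | h
  · rw [(cmp_eq_lt_iff _ _).2 h, (cmp_eq_lt_iff _ _).2 (hf ha hb h)]
  · rw [h, cmp_self_eq_eq, cmp_self_eq_eq]
  · rw [(cmp_eq_gt_iff _ _).2 h, (cmp_eq_gt_iff _ _).2 (hf hb ha h)]

/-- Invariance of atomic-term comparisons under pattern equality. -/
lemma atomic_eval_cmp {Y : Type} {K : Finset ℚ} {α β : Y → ℚ} (h : patEq K α β)
    {s t : Trm Y ℚ} (hs : s.atomic) (ht : t.atomic)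
    (hks : s.consts ⊆ ↑K) (hkt : t.consts ⊆ ↑K) :
    cmp (s.eval α) (t.eval α) = cmp (s.eval β) (t.eval β) := by
  cases s with
  | var x =>
    cases t with
    | var y => exact h.1 x y
    | const c =>
      have hc : c ∈ K := by
        have := hkt (show c ∈ Trm.consts (Trm.const c : Trm Y ℚ) by
          simp [Trm.consts])
        simpa using this
      exact h.2 x c hc
    | add u v => exact ht.elim
    | sub u v => exact ht.elim
  | const c =>
    cases t with
    | var y =>
      have hc : c ∈ K := by
        have := hks (show c ∈ Trm.consts (Trm.const c : Trm Y ℚ) by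
          simp [Trm.consts])
        simpa using this
      show cmp c (α y) = cmp c (β y)
      rw [← cmp_swap (α y) c, ← cmp_swap (β y) c, h.2 y c hc]
    | const d => rfl
    | add u v => exact ht.elim
    | sub u v => exact ht.elim
  | add u v => exact hs.elim
  | sub u v => exact hs.elim

/-- Invariance of MC constraints under pattern equality. -/
lemma constr_inv {Y : Type} {K : Finset ℚ} {α β : Y → ℚ} (h : patEq K α β)
    (c : Constr Y ℚ) (hmc : c.isMC) (hk : c.consts ⊆ ↑K) :
    c.holds α ↔ c.holds β := by
  induction c with
  | tru => exact Iff.rfl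
  | eq s t =>
    simp only [Constr.consts, Set.union_subset_iff] at hk
    exact eq_iff_of_cmp (atomic_eval_cmp h hmc.1 hmc.2 hk.1 hk.2)
  | ne s t =>
    simp only [Constr.consts, Set.union_subset_iff] at hk
    exact not_congr (eq_iff_of_cmp (atomic_eval_cmp h hmc.1 hmc.2 hk.1 hk.2))
  | lt s t =>
    simp only [Constr.consts, Set.union_subset_iff] at hk
    exact lt_iff_of_cmp (atomic_eval_cmp h hmc.1 hmc.2 hk.1 hk.2)
  | le s t =>
    simp only [Constr.consts, Set.union_subset_iff] at hk
    exact le_iff_of_cmp (atomic_eval_cmp h hmc.1 hmc.2 hk.1 hk.2)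
  | and c d ihc ihd =>
    simp only [Constr.consts, Set.union_subset_iff] at hk
    exact and_congr (ihc hmc.1 hk.1) (ihd hmc.2 hk.2)

/-- Invariance of MC formulas under pattern equality. -/
lemma bform_inv {Y : Type} {K : Finset ℚ} {α β : Y → ℚ} (h : patEq K α β)
    (φ : BForm Y ℚ) (hmc : φ.isMC) (hk : φ.constsIn ↑K) :
    φ.holds α ↔ φ.holds β := by
  induction φ with
  | atom c => exact constr_inv h c hmc hk
  | and f g ihf ihg => exact and_congr (ihf hmc.1 hk.1) (ihg hmc.2 hk.2)
  | or f g ihf ihg => exact or_congr (ihf hmc.1 hk.1) (ihg hmc.2 hk.2)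
  | not f ihf => exact not_congr (ihf hmc hk)

/-! ### Extension of finite partial order-embeddings of `ℚ` -/

/-- One-point extension: a point can be placed in correct relative position to
the image of a finite strictly monotone map. -/
lemma exists_point {s : Finset ℚ} {m : ℚ → ℚ} (hm : StrictMonoOn m ↑s) (u : ℚ) :
    ∃ q : ℚ, ∀ a ∈ s, cmp q (m a) = cmp u a := by
  classical
  by_cases hu : u ∈ s
  · exact ⟨m u, fun a ha => cmp_map_of_strictMonoOn hm hu ha⟩
  have key : ∀ q : ℚ, (∀ a ∈ s, a < u → m a < q) → (∀ a ∈ s, u < a → q < m a) →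
      ∀ a ∈ s, cmp q (m a) = cmp u a := by
    intro q h1 h2 a ha
    rcases lt_trichotomy u a with h | h | h
    · rw [(cmp_eq_lt_iff _ _).2 h, (cmp_eq_lt_iff _ _).2 (h2 a ha h)]
    · exact absurd (h ▸ ha) hu
    · rw [(cmp_eq_gt_iff _ _).2 h, (cmp_eq_gt_iff _ _).2 (h1 a ha h)]
  have hmle : ∀ {a b : ℚ}, a ∈ s → b ∈ s → a ≤ b → m a ≤ m b := by
    intro a b ha hb hab
    rcases hab.lt_or_eq with h | h
    · exact (hm ha hb h).le
    · rw [h]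
  set l := s.filter (fun a => a < u) with hl
  set r := s.filter (fun a => u < a) with hr
  have memL : ∀ a ∈ s, a < u → a ∈ l := fun a ha h => Finset.mem_filter.2 ⟨ha, h⟩
  have memR : ∀ a ∈ s, u < a → a ∈ r := fun a ha h => Finset.mem_filter.2 ⟨ha, h⟩
  by_cases hln : l.Nonempty <;> by_cases hrn : r.Nonempty
  · set A := l.max' hln with hA
    set R := r.min' hrn with hR
    have hAl : A ∈ l := l.max'_mem hln
    have hRr : R ∈ r := r.min'_mem hrn
    have hAs : A ∈ s := (Finset.mem_filter.1 hAl).1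
    have hRs : R ∈ s := (Finset.mem_filter.1 hRr).1
    have hAu : A < u := (Finset.mem_filter.1 hAl).2
    have huR : u < R := (Finset.mem_filter.1 hRr).2
    have hAB : m A < m R := hm hAs hRs (hAu.trans huR)
    refine ⟨(m A + m R) / 2, key _ ?_ ?_⟩
    · intro a ha h
      have : m a ≤ m A := hmle ha hAs (l.le_max' a (memL a ha h))
      linarith
    · intro a ha h
      have : m R ≤ m a := hmle hRs ha (r.min'_le a (memR a ha h))
      linarith
  · refine ⟨m (l.max' hln) + 1, key _ ?_ ?_⟩
    · intro a ha h
      have : m a ≤ m (l.max' hln) :=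
        hmle ha (Finset.mem_filter.1 (l.max'_mem hln)).1 (l.le_max' a (memL a ha h))
      linarith
    · intro a ha h
      exact absurd ⟨a, memR a ha h⟩ hrn
  · refine ⟨m (r.min' hrn) - 1, key _ ?_ ?_⟩
    · intro a ha h
      exact absurd ⟨a, memL a ha h⟩ hln
    · intro a ha h
      have : m (r.min' hrn) ≤ m a :=
        hmle (Finset.mem_filter.1 (r.min'_mem hrn)).1 ha (r.min'_le a (memR a ha h))
      linarith
  · refine ⟨0, key _ ?_ ?_⟩
    · intro a ha h; exact absurd ⟨a, memL a ha h⟩ hln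
    · intro a ha h; exact absurd ⟨a, memR a ha h⟩ hrn

/-- Finite extension: a strictly monotone map on a finite set extends to any
finitely many further points. -/
lemma exists_ext {s : Finset ℚ} (t : Finset ℚ) {m : ℚ → ℚ}
    (hm : StrictMonoOn m ↑s) :
    ∃ f : ℚ → ℚ, (∀ a ∈ s, f a = m a) ∧ StrictMonoOn f ↑(s ∪ t) := by
  classical
  induction t using Finset.induction_on with
  | empty => exact ⟨m, fun a _ => rfl, by simpa using hm⟩
  | @insert u t hu ih =>
    obtain ⟨f, hf, hmono⟩ := ih
    by_cases hus : u ∈ s ∪ t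
    · have heq : s ∪ insert u t = s ∪ t := by
        rw [Finset.union_insert, Finset.insert_eq_self.2 hus]
      exact ⟨f, hf, heq ▸ hmono⟩
    · obtain ⟨q, hq⟩ := exists_point hmono u
      have mem : ∀ z : ℚ, z ∈ (↑(s ∪ insert u t) : Set ℚ) ↔ z = u ∨ z ∈ s ∪ t := by
        intro z
        simp only [Finset.coe_union, Finset.coe_insert, Set.mem_union,
          Set.mem_insert_iff, Finset.mem_coe, Finset.mem_union]
        tauto
      refine ⟨Function.update f u q, fun a ha => ?_, ?_⟩
      · rw [Function.update_of_ne
            (fun h => hus (by rw [← h]; exact Finset.mem_union_left _ ha)),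
          hf a ha]
      · intro x hx y hy hxy
        rcases (mem x).1 hx with hxeq | hx' <;> rcases (mem y).1 hy with hyeq | hy'
        · rw [hxeq, hyeq] at hxy; exact absurd hxy (lt_irrefl _)
        · have hyu : y ≠ u := fun h => hus (by rw [← h]; exact hy')
          rw [hxeq] at hxy ⊢
          rw [Function.update_self, Function.update_of_ne hyu]
          exact (cmp_eq_lt_iff _ _).1 ((hq y hy').trans ((cmp_eq_lt_iff _ _).2 hxy))
        · have hxu : x ≠ u := fun h => hus (by rw [← h]; exact hx')
          rw [hyeq] at hxy ⊢
          rw [Function.update_self, Function.update_of_ne hxu]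
          exact (cmp_eq_gt_iff _ _).1 ((hq x hx').trans ((cmp_eq_gt_iff _ _).2 hxy))
        · have hxu : x ≠ u := fun h => hus (by rw [← h]; exact hx')
          have hyu : y ≠ u := fun h => hus (by rw [← h]; exact hy')
          rw [Function.update_of_ne hxu, Function.update_of_ne hyu]
          exact hmono (Finset.mem_coe.2 hx') (Finset.mem_coe.2 hy') hxy

/-- The key extension lemma: an existential witness can be transported along
pattern equality. -/
lemma exists_match {Y : Type} [Fintype Y] {K : Finset ℚ}
    (a1 a1' a2' : Y → ℚ) (h : patEq K a1' a2') :
    ∃ a2 : Y → ℚ, patEq K (Sum.elim a1 a1') (Sum.elim a2 a2') := by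
  classical
  set s : Finset ℚ := Finset.image a1' Finset.univ ∪ K with hs
  have hmemdef : ∀ z ∈ s, (∃ v, a1' v = z) ∨ z ∈ K := by
    intro z hz
    rcases Finset.mem_union.1 hz with h' | h'
    · obtain ⟨v, _, rfl⟩ := Finset.mem_image.1 h'
      exact Or.inl ⟨v, rfl⟩
    · exact Or.inr h'
  set m : ℚ → ℚ := fun z => if hz : ∃ v, a1' v = z then a2' hz.choose else z with hmdef
  have m1 : ∀ v, m (a1' v) = a2' v := by
    intro v
    have hz : ∃ w, a1' w = a1' v := ⟨v, rfl⟩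
    have : m (a1' v) = a2' hz.choose := by rw [hmdef]; exact dif_pos hz
    rw [this]
    refine (cmp_eq_eq_iff _ _).1 ?_
    rw [← h.1 hz.choose v, hz.choose_spec, cmp_self_eq_eq]
  have m2 : ∀ c ∈ K, m c = c := by
    intro c hc
    by_cases hz : ∃ v, a1' v = c
    · have : m c = a2' hz.choose := by rw [hmdef]; exact dif_pos hz
      rw [this]
      refine (cmp_eq_eq_iff _ _).1 ?_
      rw [← h.2 hz.choose c hc, hz.choose_spec, cmp_self_eq_eq]
    · rw [hmdef]; exact dif_neg hz
  have key : ∀ z₁ ∈ s, ∀ z₂ ∈ s, cmp (m z₁) (m z₂) = cmp z₁ z₂ := by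
    intro z₁ h₁ z₂ h₂
    rcases hmemdef z₁ h₁ with ⟨v, rfl⟩ | hk₁ <;>
      rcases hmemdef z₂ h₂ with ⟨w, rfl⟩ | hk₂
    · rw [m1, m1]; exact (h.1 v w).symm
    · rw [m1, m2 _ hk₂]; exact (h.2 v z₂ hk₂).symm
    · rw [m2 _ hk₁, m1]
      rw [← cmp_swap (a2' w) z₁, ← cmp_swap (a1' w) z₁, h.2 w z₁ hk₁]
    · rw [m2 _ hk₁, m2 _ hk₂]
  have hmono : StrictMonoOn m ↑s := by
    intro a ha b hb hab
    have := key a (Finset.mem_coe.1 ha) b (Finset.mem_coe.1 hb)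
    exact (cmp_eq_lt_iff _ _).1 (this.trans ((cmp_eq_lt_iff _ _).2 hab))
  obtain ⟨f, hf, hfm⟩ := exists_ext (Finset.image a1 Finset.univ) hmono
  have hsub : ∀ z ∈ s, z ∈ s ∪ Finset.image a1 Finset.univ :=
    fun z hz => Finset.mem_union_left _ hz
  have hins : ∀ v, a1' v ∈ s :=
    fun v => Finset.mem_union_left _ (Finset.mem_image.2 ⟨v, Finset.mem_univ _, rfl⟩)
  have hKs : ∀ c ∈ K, c ∈ s := fun c hc => Finset.mem_union_right _ hc
  have ht : ∀ x, a1 x ∈ s ∪ Finset.image a1 Finset.univ :=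
    fun x => Finset.mem_union_right _ (Finset.mem_image.2 ⟨x, Finset.mem_univ _, rfl⟩)
  have hcmpf : ∀ z₁ ∈ s ∪ Finset.image a1 Finset.univ,
      ∀ z₂ ∈ s ∪ Finset.image a1 Finset.univ, cmp (f z₁) (f z₂) = cmp z₁ z₂ :=
    fun z₁ h₁ z₂ h₂ =>
      cmp_map_of_strictMonoOn hfm (Finset.mem_coe.2 h₁) (Finset.mem_coe.2 h₂)
  have hfa2' : ∀ v, f (a1' v) = a2' v :=
    fun v => (hf _ (hins v)).trans (m1 v)
  have hfK : ∀ c ∈ K, f c = c := fun c hc => (hf c (hKs c hc)).trans (m2 c hc)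
  refine ⟨fun x => f (a1 x), ?_, ?_⟩
  · intro z w
    cases z with
    | inl x =>
      cases w with
      | inl y =>
        exact (hcmpf _ (ht x) _ (ht y)).symm
      | inr v =>
        show cmp (a1 x) (a1' v) = cmp (f (a1 x)) (a2' v)
        exact (hcmpf _ (ht x) _ (hsub _ (hins v))).symm.trans
          (congrArg _ (hfa2' v))
    | inr v =>
      cases w with
      | inl y =>
        show cmp (a1' v) (a1 y) = cmp (a2' v) (f (a1 y))
        exact (hcmpf _ (hsub _ (hins v)) _ (ht y)).symm.trans
          (congrArg (fun z => cmp z (f (a1 y))) (hfa2' v))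
      | inr w =>
        exact h.1 v w
  · intro z c hc
    cases z with
    | inl x =>
      show cmp (a1 x) c = cmp (f (a1 x)) c
      exact (hcmpf _ (ht x) _ (hsub _ (hKs c hc))).symm.trans
        (congrArg _ (hfK c hc))
    | inr v => exact h.2 v c hc

/-! ### Definability of pattern-invariant predicates by MC-formulas -/

def andList {Y : Type} : List (Constr Y ℚ) → Constr Y ℚ
  | [] => .tru
  | c :: l => .and c (andList l)

lemma andList_holds {Y : Type} (α : Y → ℚ) (l : List (Constr Y ℚ)) :
    (andList l).holds α ↔ ∀ c ∈ l, c.holds α := by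
  induction l with
  | nil => simp [andList, Constr.holds]
  | cons c l ih => simp [andList, Constr.holds, ih]

lemma andList_isMC {Y : Type} (l : List (Constr Y ℚ)) (h : ∀ c ∈ l, c.isMC) :
    (andList l).isMC := by
  induction l with
  | nil => exact trivial
  | cons c l ih =>
    exact ⟨h c (List.mem_cons_self), ih fun d hd => h d (List.mem_cons_of_mem _ hd)⟩

lemma andList_consts {Y : Type} {S : Set ℚ} (l : List (Constr Y ℚ))
    (h : ∀ c ∈ l, c.consts ⊆ S) : (andList l).consts ⊆ S := by
  induction l with
  | nil => simp [andList, Constr.consts]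
  | cons c l ih =>
    exact Set.union_subset (h c (List.mem_cons_self))
      (ih fun d hd => h d (List.mem_cons_of_mem _ hd))

def orList {Y : Type} (d : BForm Y ℚ) : List (BForm Y ℚ) → BForm Y ℚ
  | [] => d
  | f :: l => .or f (orList d l)

lemma orList_holds {Y : Type} (α : Y → ℚ) (d : BForm Y ℚ) (l : List (BForm Y ℚ)) :
    (orList d l).holds α ↔ (∃ f ∈ l, f.holds α) ∨ d.holds α := by
  induction l with
  | nil => simp [orList]
  | cons f l ih => simp [orList, BForm.holds, ih, or_assoc]

lemma orList_isMC {Y : Type} (d : BForm Y ℚ) (hd : d.isMC) (l : List (BForm Y ℚ))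
    (h : ∀ f ∈ l, f.isMC) : (orList d l).isMC := by
  induction l with
  | nil => exact hd
  | cons f l ih =>
    exact ⟨h f (List.mem_cons_self), ih fun g hg => h g (List.mem_cons_of_mem _ hg)⟩

lemma orList_constsIn {Y : Type} {S : Set ℚ} (d : BForm Y ℚ) (hd : d.constsIn S)
    (l : List (BForm Y ℚ)) (h : ∀ f ∈ l, f.constsIn S) : (orList d l).constsIn S := by
  induction l with
  | nil => exact hd
  | cons f l ih =>
    exact ⟨h f (List.mem_cons_self), ih fun g hg => h g (List.mem_cons_of_mem _ hg)⟩

def ordConstr {Y : Type} (a b : Trm Y ℚ) : Ordering → Constr Y ℚ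
  | .lt => .lt a b
  | .eq => .eq a b
  | .gt => .lt b a

lemma ordConstr_holds {Y : Type} (α : Y → ℚ) (a b : Trm Y ℚ) (o : Ordering) :
    (ordConstr a b o).holds α ↔ cmp (a.eval α) (b.eval α) = o := by
  cases o <;>
    simp [ordConstr, Constr.holds, cmp_eq_lt_iff, cmp_eq_eq_iff, cmp_eq_gt_iff]

lemma ordConstr_isMC {Y : Type} {a b : Trm Y ℚ} (ha : a.atomic) (hb : b.atomic)
    (o : Ordering) : (ordConstr a b o).isMC := by
  cases o <;> exact ⟨by assumption, by assumption⟩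

lemma ordConstr_consts {Y : Type} {S : Set ℚ} {a b : Trm Y ℚ}
    (ha : a.consts ⊆ S) (hb : b.consts ⊆ S) (o : Ordering) :
    (ordConstr a b o).consts ⊆ S := by
  cases o <;> exact Set.union_subset (by assumption) (by assumption)

/-- The order pattern (type) of an assignment. -/
def tauF {Y : Type} (K : Finset ℚ) (α : Y → ℚ) :
    (Y → Y → Ordering) × (Y → {c // c ∈ K} → Ordering) :=
  (fun x y => cmp (α x) (α y), fun x c => cmp (α x) c.1)

lemma patEq_of_tau {Y : Type} {K : Finset ℚ} {α β : Y → ℚ}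
    (h : tauF K α = tauF K β) : patEq K α β :=
  ⟨fun x y => congrFun (congrFun (congrArg Prod.fst h) x) y,
   fun x c hc => congrFun (congrFun (congrArg Prod.snd h) x) ⟨c, hc⟩⟩

/-- Any pattern-invariant predicate is definable by an MC-formula over `K`. -/
lemma invariant_definable {Y : Type} [Finite Y] {K : Finset ℚ} (hK : K.Nonempty)
    (P : (Y → ℚ) → Prop) (hP : ∀ α β, patEq K α β → P α → P β) :
    ∃ φ : BForm Y ℚ, φ.isMC ∧ φ.constsIn ↑K ∧ ∀ α, P α ↔ φ.holds α := by
  classical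
  cases nonempty_fintype Y
  haveI : Fintype ((Y → Y → Ordering) × (Y → {c // c ∈ K} → Ordering)) :=
    Fintype.ofFinite _
  set desc : ((Y → Y → Ordering) × (Y → {c // c ∈ K} → Ordering)) → BForm Y ℚ :=
    fun t => .atom (andList
      (((Finset.univ : Finset (Y × Y)).toList.map
          (fun p => ordConstr (.var p.1) (.var p.2) (t.1 p.1 p.2))) ++
       ((Finset.univ : Finset (Y × {c // c ∈ K})).toList.map
          (fun p => ordConstr (.var p.1) (.const p.2.1) (t.2 p.1 p.2))))) with hdesc
  have desc_holds : ∀ t α, (desc t).holds α ↔ tauF K α = t := by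
    intro t α
    show (andList _).holds α ↔ _
    rw [andList_holds]
    constructor
    · intro hall
      have h1 : ∀ x y, cmp (α x) (α y) = t.1 x y := by
        intro x y
        have := hall _ (List.mem_append_left _
          (List.mem_map_of_mem (Finset.mem_toList.2 (Finset.mem_univ (x, y)))))
        rw [ordConstr_holds] at this
        exact this
      have h2 : ∀ x (c : {c // c ∈ K}), cmp (α x) c.1 = t.2 x c := by
        intro x c
        have := hall _ (List.mem_append_right _
          (List.mem_map_of_mem (Finset.mem_toList.2 (Finset.mem_univ (x, c)))))
        rw [ordConstr_holds] at this
        exact this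
      exact Prod.ext_iff.2 ⟨funext fun x => funext (h1 x), funext fun x => funext (h2 x)⟩
    · rintro rfl c hc
      rcases List.mem_append.1 hc with h' | h' <;>
        obtain ⟨p, _, rfl⟩ := List.mem_map.1 h' <;> rw [ordConstr_holds] <;> rfl
  set S : Finset ((Y → Y → Ordering) × (Y → {c // c ∈ K} → Ordering)) :=
    Finset.univ.filter fun t => ∃ α, tauF K α = t ∧ P α with hS
  refine ⟨orList (.atom (.lt (.const hK.choose) (.const hK.choose)))
    (S.toList.map desc), ?_, ?_, ?_⟩
  · refine orList_isMC _ (by exact ⟨trivial, trivial⟩) _ ?_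
    intro f hf
    obtain ⟨t, _, rfl⟩ := List.mem_map.1 hf
    refine andList_isMC _ ?_
    intro c hc
    rcases List.mem_append.1 hc with h' | h' <;>
      obtain ⟨p, _, rfl⟩ := List.mem_map.1 h' <;>
      (refine ordConstr_isMC ?_ ?_ _ <;> exact trivial)
  · refine orList_constsIn _ ?_ _ ?_
    · show Constr.consts _ ⊆ _
      simp only [Constr.consts, Trm.consts, Set.union_self]
      exact Set.singleton_subset_iff.2 (Finset.mem_coe.2 hK.choose_spec)
    · intro f hf
      obtain ⟨t, _, rfl⟩ := List.mem_map.1 hf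
      refine andList_consts _ ?_
      intro c hc
      rcases List.mem_append.1 hc with h' | h' <;>
        obtain ⟨p, _, rfl⟩ := List.mem_map.1 h'
      · exact ordConstr_consts (by simp [Trm.consts]) (by simp [Trm.consts]) _
      · refine ordConstr_consts (by simp [Trm.consts]) ?_ _
        show Trm.consts (Trm.const p.2.1 : Trm Y ℚ) ⊆ _
        simp only [Trm.consts]
        exact Set.singleton_subset_iff.2 (Finset.mem_coe.2 p.2.2)
  · intro α
    rw [orList_holds]
    constructor
    · intro hPα
      refine Or.inl ⟨desc (tauF K α), List.mem_map.2 ⟨tauF K α, ?_, rfl⟩,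
        (desc_holds _ _).2 rfl⟩
      exact Finset.mem_toList.2 (Finset.mem_filter.2 ⟨Finset.mem_univ _, α, rfl, hPα⟩)
    · rintro (⟨f, hfmem, hfh⟩ | habs)
      · obtain ⟨t, ht, rfl⟩ := List.mem_map.1 hfmem
        have htau := (desc_holds t α).1 hfh
        obtain ⟨β, hβt, hβP⟩ := (Finset.mem_filter.1 (Finset.mem_toList.1 ht)).2
        exact hP β α (patEq_of_tau (hβt.trans htau.symm)) hβP
      · exact absurd habs (lt_irrefl _)

end MCAux

/-- Theorem 1.  If all guards of `M` are conjunctions of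
monotonicity constraints over `ℚ` and `CC` is a finite set of MCs, then
`(M, CC)` admits a finite summary; specifically `B × MC_Const` is a finite
history set, where `Const` collects the constants of `CC`, `α₀` and the
guards. -/
theorem mc_ddsa_finite_summary (B A X : Type) [Finite B] [Finite X]
    (M : DDSA B A X ℚ) (CC : Set (Constr X ℚ)) (hCCfin : CC.Finite)
    (Const : Finset ℚ) (hne : Const.Nonempty)
    (hguard : ∀ a, (M.guard a).isMC ∧ (M.guard a).consts ⊆ ↑Const)
    (ha0 : ∀ v, M.a0 v ∈ Const)
    (hCC : ∀ c ∈ CC, c.isMC ∧ c.consts ⊆ ↑Const) :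
    (PhiMC B X Const).Finite ∧ M.IsHistorySet CC (PhiMC B X Const) ∧
    M.HasFiniteSummary CC := by
  classical
  cases nonempty_fintype X
  have hfin : (PhiMC B X Const).Finite := by
    haveI : Finite (Set ((X → X → Ordering) × (X → {c // c ∈ Const} → Ordering))) :=
      inferInstanceAs (Finite (((X → X → Ordering) ×
        (X → {c // c ∈ Const} → Ordering)) → Prop))
    have hsub : PhiMC B X Const ⊆ Set.range
        (fun p : B × Set ((X → X → Ordering) × (X → {c // c ∈ Const} → Ordering)) =>
          (p.1, fun α => tauF Const α ∈ p.2)) := by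
      rintro p ⟨φ, hmc, hcst, hPeq⟩
      refine ⟨(p.1, {t | ∃ α, tauF Const α = t ∧ φ.holds α}), ?_⟩
      refine Prod.ext_iff.2 ⟨rfl, ?_⟩
      rw [hPeq]
      funext α
      refine propext ⟨?_, fun h => ⟨α, rfl, h⟩⟩
      rintro ⟨β, hβ, hPβ⟩
      exact (bform_inv (patEq_of_tau hβ) φ hmc hcst).1 hPβ
    exact (Set.finite_range _).subset hsub
  have hhs : M.IsHistorySet CC (PhiMC B X Const) := by
    constructor
    · intro C hC
      have hinv : ∀ α β, patEq Const α β → M.initPred C α → M.initPred C β := by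
        rintro α β hab ⟨hinit, hcs⟩
        refine ⟨fun v => (eq_iff_of_cmp (hab.2 v (M.a0 v) (ha0 v))).1 (hinit v), ?_⟩
        intro c hc
        exact (constr_inv hab c (hCC c (hC hc)).1 (hCC c (hC hc)).2).1 (hcs c hc)
      obtain ⟨φ, h1, h2, h3⟩ := invariant_definable hne (M.initPred C) hinv
      exact ⟨fun α => φ.holds α, ⟨φ, h1, h2, rfl⟩, fun α => (h3 α).symm⟩
    · intro b P hP a b' htr C hC
      obtain ⟨φ, hφmc, hφk, hPeq0⟩ := hP
      have hPeq : P = fun α => φ.holds α := hPeq0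
      have hinv : ∀ α β, patEq Const α β →
          (M.updateSem P a α ∧ csHolds α C) → (M.updateSem P a β ∧ csHolds β C) := by
        rintro α' β' hab ⟨⟨α₁, hPα, hg, hfr⟩, hcs⟩
        obtain ⟨α₂, hpe⟩ := exists_match α₁ α' β' hab
        have hpe' : patEq Const α₁ α₂ :=
          ⟨fun x y => hpe.1 (.inl x) (.inl y), fun x c hc => hpe.2 (.inl x) c hc⟩
        refine ⟨⟨α₂, ?_, ?_, ?_⟩, ?_⟩
        · rw [hPeq] at hPα ⊢
          exact (bform_inv hpe' φ hφmc hφk).1 hPα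
        · exact (constr_inv hpe (M.guard a) (hguard a).1 (hguard a).2).1 hg
        · intro v hv
          exact (eq_iff_of_cmp (hpe.1 (.inr v) (.inl v))).1 (hfr v hv)
        · intro c hc
          exact (constr_inv hab c (hCC c (hC hc)).1 (hCC c (hC hc)).2).1 (hcs c hc)
      obtain ⟨ψ, h1, h2, h3⟩ :=
        invariant_definable hne (fun α => M.updateSem P a α ∧ csHolds α C) hinv
      exact ⟨fun α => ψ.holds α, ⟨ψ, h1, h2, rfl⟩, fun α => (h3 α).symm⟩
  exact ⟨hfin, hhs, ⟨PhiMC B X Const, hfin, hhs⟩⟩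

end DDS
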